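/- Let G be a graph on vertex set {0,1}^k where x and y are adjacent iff some string z can be obtained from each of x and y by at most d deletions, where d = ⌈4 log₂ k⌉. Then the maximum degree of G is at most binom(k,d)² · 2^d, and for sufficiently large k this bound is at most 2^{k/2} − 1. -/

import Mathlib

/-- All supersequences of `z` of length `n` (with multiplicity; used only for an upper bound). -/
def supers : List Bool → ℕ → List (List Bool)
  | [], 0 => [[]]
  | _ :: _, 0 => []
  | [], n+1 => (supers [] n).flatMap fun w => [true :: w, false :: w]
  | a :: zt, n+1 =>
      ((supers zt n).map (a :: ·)) ++ (supers (a :: zt) n).flatMap fun w => [true :: w, false :: w]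

lemma length_flatMap_two (L : List (List Bool)) :
    (L.flatMap fun w => [true :: w, false :: w]).length = L.length * 2 := by
  induction L with
  | nil => rfl
  | cons w L ih => simp [List.flatMap_cons, ih]; ring

lemma mem_supers : ∀ (n : ℕ) (z y : List Bool), z.Sublist y → y.length = n → y ∈ supers z n
  | 0, z, y, hzy, hy => by
    have : y = [] := List.length_eq_zero_iff.mp hy
    subst this
    have : z = [] := List.sublist_nil.mp hzy
    subst this
    simp [supers]
  | n+1, z, y, hzy, hy => by
    obtain ⟨b, yt, rfl⟩ : ∃ b yt, y = b :: yt := by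
      cases y with
      | nil => simp at hy
      | cons b yt => exact ⟨b, yt, rfl⟩
    have hyt : yt.length = n := by simpa using hy
    cases z with
    | nil =>
      have h1 : yt ∈ supers [] n := mem_supers n [] yt (List.nil_sublist _) hyt
      show _ ∈ (supers [] n).flatMap fun w => [true :: w, false :: w]
      rw [List.mem_flatMap]
      exact ⟨yt, h1, by cases b <;> simp⟩
    | cons a zt =>
      cases hzy with
      | cons _ h =>
        have h1 : b :: yt ∈ (supers (a :: zt) n).flatMap fun w => [true :: w, false :: w] := by
          rw [List.mem_flatMap]
          exact ⟨yt, mem_supers n _ yt h hyt, by cases b <;> simp⟩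
        exact List.mem_append_right _ h1
      | cons_cons _ h =>
        refine List.mem_append_left _ ?_
        exact List.mem_map.mpr ⟨yt, mem_supers n zt yt h hyt, rfl⟩

lemma supers_eq_nil : ∀ (n : ℕ) (z : List Bool), n < z.length → supers z n = []
  | 0, [], h => by simp at h
  | 0, _ :: _, _ => rfl
  | n+1, [], h => by simp at h
  | n+1, a :: zt, h => by
    have h1 : supers zt n = [] := supers_eq_nil n zt (by simpa using h)
    have h2 : supers (a :: zt) n = [] :=
      supers_eq_nil n (a :: zt) (lt_trans (Nat.lt_succ_self n) h)
    show ((supers zt n).map (a :: ·)) ++ _ = []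
    rw [h1, h2]
    rfl

lemma length_supers : ∀ (n : ℕ) (z : List Bool),
    (supers z n).length ≤ n.choose (n - z.length) * 2 ^ (n - z.length)
  | 0, [] => by simp [supers]
  | 0, _ :: _ => by simp [supers]
  | n+1, [] => by
    show ((supers [] n).flatMap fun w => [true :: w, false :: w]).length ≤ _
    rw [length_flatMap_two]
    calc (supers [] n).length * 2 ≤ (n.choose (n - 0) * 2 ^ (n - 0)) * 2 :=
          Nat.mul_le_mul_right 2 (length_supers n [])
      _ = (n+1).choose (n+1) * 2 ^ (n + 1) := by simp [pow_succ]
      _ = _ := by simp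
  | n+1, a :: zt => by
    show (((supers zt n).map (a :: ·)) ++
        (supers (a :: zt) n).flatMap fun w => [true :: w, false :: w]).length ≤ _
    rw [List.length_append, List.length_map, length_flatMap_two]
    set m := zt.length with hm
    have h1 := length_supers n zt
    rcases lt_or_ge m n with hlt | hge
    · have h2 := length_supers n (a :: zt)
      have e1 : n - (a :: zt).length = n - m - 1 := by first | (simp [List.length_cons, ← hm]; omega) | simp [List.length_cons, ← hm] | omega
      have e2 : (n+1) - (a :: zt).length = n - m := by first | (simp [List.length_cons, ← hm]; omega) | simp [List.length_cons, ← hm] | omega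
      have hnm : n - m = (n - m - 1) + 1 := by omega
      rw [e1] at h2
      have key : ∀ j : ℕ, n.choose (j+1) * 2 ^ (j+1) + (n.choose j * 2 ^ j) * 2
          = (n+1).choose (j+1) * 2 ^ (j+1) := by
        intro j
        rw [Nat.choose_succ_succ]
        ring
      calc (supers zt n).length + (supers (a :: zt) n).length * 2
          ≤ n.choose (n - m) * 2 ^ (n - m) + (n.choose (n - m - 1) * 2 ^ (n - m - 1)) * 2 :=
            Nat.add_le_add h1 (Nat.mul_le_mul_right 2 h2)
        _ = (n+1).choose (n - m) * 2 ^ (n - m) := by rw [hnm]; exact key (n - m - 1)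
        _ = _ := by rw [e2]
    · have h0 : supers (a :: zt) n = [] :=
        supers_eq_nil n _ (by first | (simp [List.length_cons, ← hm]; omega) | simp [List.length_cons, ← hm] | omega)
      have e2 : (n+1) - (a :: zt).length = n - m := by first | (simp [List.length_cons, ← hm]; omega) | simp [List.length_cons, ← hm] | omega
      rw [h0, e2]
      simp only [List.length_nil, Nat.zero_mul, Nat.add_zero]
      calc (supers zt n).length ≤ n.choose (n - m) * 2 ^ (n - m) := h1
        _ ≤ (n+1).choose (n - m) * 2 ^ (n - m) :=
            Nat.mul_le_mul_right _ (Nat.choose_le_choose _ (Nat.le_succ n))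

set_option maxHeartbeats 1000000 in
/-- in the graph on `{0,1}^k` where `x ~ y` iff some string `z` is obtainable
from each of `x` and `y` by at most `d = ⌈4 log₂ k⌉` deletions (i.e. `z` is a common
subsequence of length at least `k - d`), every vertex has degree at most
`C(k,d)² · 2^d`, and for sufficiently large `k` this bound is at most `2^{k/2} - 1`. -/
theorem deletion_graph_degree_bound :
    ∃ K : ℕ, ∀ k : ℕ, K ≤ k →
      (∀ x : {l : List Bool // l.length = k},
        {y : {l : List Bool // l.length = k} |
            x ≠ y ∧ ∃ z : List Bool,
              k - ⌈4 * Real.logb 2 (k : ℝ)⌉₊ ≤ z.length ∧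
              z.Sublist x.1 ∧ z.Sublist y.1}.ncard ≤
          (k.choose ⌈4 * Real.logb 2 (k : ℝ)⌉₊) ^ 2 * 2 ^ ⌈4 * Real.logb 2 (k : ℝ)⌉₊) ∧
      (((k.choose ⌈4 * Real.logb 2 (k : ℝ)⌉₊) ^ 2 *
          2 ^ ⌈4 * Real.logb 2 (k : ℝ)⌉₊ : ℕ) : ℝ) ≤ 2 ^ ((k : ℝ) / 2) - 1 := by
  classical
  refine ⟨1263376, fun k hk => ?_⟩
  have hkR : (1263376 : ℝ) ≤ (k : ℝ) := by exact_mod_cast hk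
  have hkpos : (0 : ℝ) < (k : ℝ) := by linarith
  have hk1 : (1 : ℝ) ≤ (k : ℝ) := by linarith
  set d : ℕ := ⌈4 * Real.logb 2 (k : ℝ)⌉₊ with hdd
  set L : ℝ := Real.logb 2 (k : ℝ) with hLdef
  clear_value d
  have hL0 : 0 ≤ L := Real.logb_nonneg (by norm_num) hk1
  have hdle : (d : ℝ) ≤ 4 * L + 1 := by
    have h := Nat.ceil_lt_add_one (show (0:ℝ) ≤ 4 * L by positivity)
    rw [hdd]
    exact h.le
  -- main analytic inequality
  have hmain : 8 * L ^ 2 + 6 * L + 2 ≤ (k : ℝ) / 2 := by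
    have hlog2 : (0.6931471803 : ℝ) < Real.log 2 := Real.log_two_gt_d9
    have hlogk0 : 0 ≤ Real.log (k : ℝ) := Real.log_nonneg hk1
    have hlog : Real.log (k : ℝ) ≤ (k : ℝ) ^ ((1:ℝ)/4) / (1/4) :=
      Real.log_le_rpow_div hkpos.le (by norm_num)
    have hq0 : (0:ℝ) ≤ (k : ℝ) ^ ((1:ℝ)/4) := Real.rpow_nonneg hkpos.le _
    have hs0 : (0:ℝ) ≤ (k : ℝ) ^ ((1:ℝ)/2) := Real.rpow_nonneg hkpos.le _
    have hLeq : L = Real.log (k : ℝ) / Real.log 2 := by rw [hLdef, Real.logb]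
    have hLle : L ≤ 8 * (k : ℝ) ^ ((1:ℝ)/4) := by
      rw [hLeq, div_le_iff₀ (by linarith)]
      nlinarith
    have hq : (k : ℝ) ^ ((1:ℝ)/4) * (k : ℝ) ^ ((1:ℝ)/4) = (k : ℝ) ^ ((1:ℝ)/2) := by
      rw [← Real.rpow_add hkpos]; norm_num
    have h14 : (k : ℝ) ^ ((1:ℝ)/4) ≤ (k : ℝ) ^ ((1:ℝ)/2) :=
      Real.rpow_le_rpow_of_exponent_le hk1 (by norm_num)
    have hhalf : (k : ℝ) ^ ((1:ℝ)/2) * (k : ℝ) ^ ((1:ℝ)/2) = (k : ℝ) := by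
      rw [← Real.rpow_add hkpos]; norm_num
    have hbig : (1124 : ℝ) ≤ (k : ℝ) ^ ((1:ℝ)/2) := by
      have h1 : ((1263376 : ℝ)) ^ ((1:ℝ)/2) ≤ (k : ℝ) ^ ((1:ℝ)/2) :=
        Real.rpow_le_rpow (by norm_num) hkR (by norm_num)
      have h2 : ((1263376 : ℝ)) ^ ((1:ℝ)/2) = 1124 := by
        rw [show (1263376 : ℝ) = 1124 ^ (2:ℕ) by norm_num, ← Real.rpow_natCast (1124:ℝ) 2,
          ← Real.rpow_mul (by norm_num)]
        norm_num
      linarith [h2 ▸ h1]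
    have hL2 : L ^ 2 ≤ 64 * (k : ℝ) ^ ((1:ℝ)/2) := by nlinarith
    nlinarith
  have hd2L : (d : ℝ) * (2 * L + 1) ≤ (k : ℝ) / 2 - 1 := by nlinarith
  have hdkR : (d : ℝ) ≤ (k : ℝ) := by nlinarith
  have hdk : d ≤ k := by exact_mod_cast hdkR
  constructor
  · -- degree bound
    intro x
    set bigL : List (List Bool) :=
      (List.sublistsLen (k - d) x.1).flatMap (fun z => supers z k) with hbigL
    have hsub : {y : {l : List Bool // l.length = k} |
        x ≠ y ∧ ∃ z : List Bool, k - d ≤ z.length ∧ z.Sublist x.1 ∧ z.Sublist y.1} ⊆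
        Subtype.val ⁻¹' {w | w ∈ bigL} := by
      rintro y ⟨-, z, hzlen, hzx, hzy⟩
      simp only [Set.mem_preimage, Set.mem_setOf_eq, hbigL, List.mem_flatMap]
      refine ⟨z.take (k - d), ?_, ?_⟩
      · refine List.mem_sublistsLen.mpr ⟨(z.take_sublist _).trans hzx, ?_⟩
        rw [List.length_take]
        omega
      · exact mem_supers k _ y.1 ((z.take_sublist _).trans hzy) y.2
    have hfinT : ({w | w ∈ bigL} : Set (List Bool)).Finite := bigL.finite_toSet
    have hfinP : (Subtype.val ⁻¹' {w | w ∈ bigL} :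
        Set {l : List Bool // l.length = k}).Finite :=
      hfinT.preimage (Subtype.val_injective.injOn)
    have hlen : bigL.length ≤ (k.choose d) ^ 2 * 2 ^ d := by
      rw [hbigL, List.length_flatMap]
      have each : ∀ t ∈ (List.sublistsLen (k - d) x.1).map (fun z => (supers z k).length),
          t ≤ k.choose d * 2 ^ d := by
        intro t ht
        obtain ⟨z, hz, rfl⟩ := List.mem_map.mp ht
        have hzlen : z.length = k - d := (List.mem_sublistsLen.mp hz).2
        have := length_supers k z
        rwa [hzlen, Nat.sub_sub_self hdk] at this
      calc ((List.sublistsLen (k - d) x.1).map (fun z => (supers z k).length)).sum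
          ≤ ((List.sublistsLen (k - d) x.1).map (fun z => (supers z k).length)).length
              • (k.choose d * 2 ^ d) := List.sum_le_card_nsmul _ _ each
        _ = k.choose d * (k.choose d * 2 ^ d) := by
            rw [List.length_map, List.length_sublistsLen, x.2, Nat.choose_symm hdk,
              smul_eq_mul]
        _ = (k.choose d) ^ 2 * 2 ^ d := by ring
    calc {y : {l : List Bool // l.length = k} |
        x ≠ y ∧ ∃ z : List Bool, k - d ≤ z.length ∧ z.Sublist x.1 ∧ z.Sublist y.1}.ncard
        ≤ (Subtype.val ⁻¹' {w | w ∈ bigL} :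
            Set {l : List Bool // l.length = k}).ncard := Set.ncard_le_ncard hsub hfinP
      _ = (Subtype.val '' (Subtype.val ⁻¹' {w | w ∈ bigL})).ncard :=
          (Set.ncard_image_of_injective _ Subtype.val_injective).symm
      _ ≤ ({w | w ∈ bigL} : Set (List Bool)).ncard :=
          Set.ncard_le_ncard (Set.image_preimage_subset _ _) hfinT
      _ = bigL.toFinset.card := by
          rw [show ({w | w ∈ bigL} : Set (List Bool)) = ↑bigL.toFinset by ext w; simp,
            Set.ncard_coe_finset]
      _ ≤ bigL.length := bigL.toFinset_card_le
      _ ≤ (k.choose d) ^ 2 * 2 ^ d := hlen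
  · -- numeric bound
    have hC : (k.choose d : ℝ) ≤ (k : ℝ) ^ d := by exact_mod_cast Nat.choose_le_pow k d
    push_cast
    have hCnn : (0:ℝ) ≤ (k.choose d : ℝ) := Nat.cast_nonneg _
    have hkpow : (0:ℝ) ≤ (k:ℝ) ^ d := by positivity
    have step1 : ((k.choose d : ℝ)) ^ 2 * 2 ^ d ≤ ((k:ℝ) ^ d) ^ 2 * 2 ^ d := by
      have : ((k.choose d : ℝ)) ^ 2 ≤ ((k:ℝ) ^ d) ^ 2 := by nlinarith
      have h2 : (0:ℝ) ≤ (2:ℝ) ^ d := by positivity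
      nlinarith
    have hkeq : (k : ℝ) = (2:ℝ) ^ L := (Real.rpow_logb (by norm_num) (by norm_num) hkpos).symm
    have step2 : ((k:ℝ) ^ d) ^ 2 * 2 ^ d = (2:ℝ) ^ (L * d * 2 + d) := by
      rw [hkeq]
      rw [← Real.rpow_natCast ((2:ℝ) ^ L) d, ← Real.rpow_mul (by norm_num)]
      rw [← Real.rpow_natCast ((2:ℝ) ^ (L * d)) 2, ← Real.rpow_mul (by norm_num)]
      rw [show ((2:ℝ) ^ d : ℝ) = (2:ℝ) ^ (d:ℝ) by rw [Real.rpow_natCast]]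
      rw [← Real.rpow_add (by norm_num : (0:ℝ) < 2)]
      norm_num
    have step3 : (2:ℝ) ^ (L * d * 2 + d) ≤ (2:ℝ) ^ ((k:ℝ)/2 - 1) := by
      apply Real.rpow_le_rpow_of_exponent_le (by norm_num)
      nlinarith
    have step4 : (2:ℝ) ^ ((k:ℝ)/2 - 1) ≤ 2 ^ ((k:ℝ)/2) - 1 := by
      have he : (2:ℝ) ^ ((k:ℝ)/2) = 2 ^ ((k:ℝ)/2 - 1) * 2 ^ (1:ℝ) := by
        rw [← Real.rpow_add (by norm_num : (0:ℝ) < 2)]; ring_nf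
      have h1 : (1:ℝ) ≤ 2 ^ ((k:ℝ)/2 - 1) := by
        apply Real.one_le_rpow (by norm_num)
        nlinarith
      rw [he, Real.rpow_one]
      nlinarith
    calc ((k.choose d : ℝ)) ^ 2 * 2 ^ d ≤ ((k:ℝ) ^ d) ^ 2 * 2 ^ d := step1
      _ = (2:ℝ) ^ (L * d * 2 + d) := step2
      _ ≤ (2:ℝ) ^ ((k:ℝ)/2 - 1) := step3
      _ ≤ 2 ^ ((k:ℝ)/2) - 1 := step4
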